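/- Let L > 0, let f : ℝ^d → ℝ^d satisfy the one-sided dissipative Lipschitz condition with constant L, let a ∈ ℝ with a ≠ 0, b ∈ ℝ^d, and let O : ℝ → ℝ be continuous with (1/t)∫_0^t O(τ) dτ → 0 as t → +∞. Let U₁, U₂ : [0, ∞) → ℝ^d be differentiable with U_i'(t) = e^{−aO(t)} f(e^{aO(t)} U_i(t) + (b/a)(e^{aO(t)} − 1)) + (a U_i(t) + b) O(t) for i = 1, 2 and all t ≥ 0. Then ‖U₁(t) − U₂(t)‖² → 0 as t → +∞, i.e. any two solutions converge pathwise to each other forward in time. -/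

import Mathlib

open Real Filter RealInnerProductSpace

/-- Pathwise convergence of any two solutions of the transformed random
differential equation when the time average of `O` vanishes. -/
theorem stmt_12 {d : ℕ} (L : ℝ) (hL : 0 < L)
    (f : EuclideanSpace ℝ (Fin d) → EuclideanSpace ℝ (Fin d))
    (hf : ∀ x y : EuclideanSpace ℝ (Fin d), ⟪x - y, f x - f y⟫ ≤ -L * ‖x - y‖ ^ 2)
    (a : ℝ) (ha : a ≠ 0) (b : EuclideanSpace ℝ (Fin d))
    (O : ℝ → ℝ) (hO : Continuous O)
    (hOavg : Tendsto (fun t : ℝ => (1 / t) * ∫ τ in (0:ℝ)..t, O τ) atTop (nhds 0))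
    (U₁ U₂ : ℝ → EuclideanSpace ℝ (Fin d))
    (hU₁ : ∀ t : ℝ, 0 ≤ t → HasDerivAt U₁
      (Real.exp (-(a * O t)) •
          f (Real.exp (a * O t) • U₁ t + (Real.exp (a * O t) - 1) • (a⁻¹ • b))
        + O t • (a • U₁ t + b)) t)
    (hU₂ : ∀ t : ℝ, 0 ≤ t → HasDerivAt U₂
      (Real.exp (-(a * O t)) •
          f (Real.exp (a * O t) • U₂ t + (Real.exp (a * O t) - 1) • (a⁻¹ • b))
        + O t • (a • U₂ t + b)) t) :
    Tendsto (fun t : ℝ => ‖U₁ t - U₂ t‖ ^ 2) atTop (nhds 0) := by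
  set u : ℝ → EuclideanSpace ℝ (Fin d) := fun t => U₁ t - U₂ t with hu_def
  set V : ℝ → ℝ := fun t => ⟪u t, u t⟫ with hV_def
  have hVnorm : ∀ t, V t = ‖u t‖ ^ 2 := fun t => real_inner_self_eq_norm_sq _
  -- derivative of u
  set u' : ℝ → EuclideanSpace ℝ (Fin d) := fun t =>
    Real.exp (-(a * O t)) •
      (f (Real.exp (a * O t) • U₁ t + (Real.exp (a * O t) - 1) • (a⁻¹ • b)) -
       f (Real.exp (a * O t) • U₂ t + (Real.exp (a * O t) - 1) • (a⁻¹ • b)))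
      + (a * O t) • u t with hu'_def
  have hu' : ∀ t, 0 ≤ t → HasDerivAt u (u' t) t := by
    intro t ht
    have h := (hU₁ t ht).sub (hU₂ t ht)
    refine h.congr_deriv ?_
    symm
    simp only [hu'_def, hu_def]
    rw [smul_sub]
    simp only [smul_add, smul_smul]
    module
  -- derivative of V
  have hV' : ∀ t, 0 ≤ t → HasDerivAt V (2 * ⟪u t, u' t⟫) t := by
    intro t ht
    have h := (hu' t ht).inner ℝ (hu' t ht)
    -- h : HasDerivAt (fun t => ⟪u t, u t⟫) (⟪u t, u' t⟫ + ⟪u' t, u t⟫) t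
    refine h.congr_deriv ?_
    symm
    rw [real_inner_comm (u' t) (u t)]; ring
  -- key dissipativity inequality
  have hkey : ∀ t, 0 ≤ t → ⟪u t, u' t⟫ ≤ (a * O t - L) * V t := by
    intro t ht
    set c := Real.exp (a * O t) with hc
    have hcpos : 0 < c := Real.exp_pos _
    set x₁ := c • U₁ t + (c - 1) • (a⁻¹ • b)
    set x₂ := c • U₂ t + (c - 1) • (a⁻¹ • b)
    have hx : x₁ - x₂ = c • u t := by
      simp only [x₁, x₂, hu_def, smul_sub]; module
    have h1 := hf x₁ x₂
    rw [hx] at h1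
    rw [real_inner_smul_left, norm_smul, Real.norm_eq_abs, abs_of_pos hcpos, mul_pow] at h1
    -- h1 : c * ⟪u t, f x₁ - f x₂⟫ ≤ -L * (c^2 * ‖u t‖^2)
    have h2 : ⟪u t, f x₁ - f x₂⟫ ≤ -L * (c * ‖u t‖ ^ 2) := by
      rw [← mul_le_mul_iff_right₀ hcpos]; nlinarith
    have h3 : ⟪u t, u' t⟫ = Real.exp (-(a * O t)) * ⟪u t, f x₁ - f x₂⟫ + (a * O t) * V t := by
      simp only [hu'_def, inner_add_right, real_inner_smul_right, hV_def]; rfl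
    rw [h3]
    have hce : Real.exp (-(a * O t)) = c⁻¹ := by rw [Real.exp_neg]
    have h4 : Real.exp (-(a * O t)) * ⟪u t, f x₁ - f x₂⟫ ≤ -L * ‖u t‖ ^ 2 := by
      rw [hce]
      calc c⁻¹ * ⟪u t, f x₁ - f x₂⟫ ≤ c⁻¹ * (-L * (c * ‖u t‖ ^ 2)) := by
            exact mul_le_mul_of_nonneg_left h2 (inv_nonneg.2 hcpos.le)
        _ = -L * ‖u t‖ ^ 2 := by field_simp
    rw [hVnorm]; nlinarith [hVnorm t]
  -- Gronwall via W = V * exp(-G)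
  set g : ℝ → ℝ := fun t => 2 * (a * O t - L) with hg_def
  have hgc : Continuous g := continuous_const.mul ((continuous_const.mul hO).sub continuous_const)
  set G : ℝ → ℝ := fun t => ∫ τ in (0:ℝ)..t, g τ with hG_def
  have hG : ∀ t, HasDerivAt G (g t) t := fun t =>
    intervalIntegral.integral_hasDerivAt_right (hgc.intervalIntegrable _ _)
      (hgc.stronglyMeasurableAtFilter _ _) hgc.continuousAt
  set W : ℝ → ℝ := fun t => V t * Real.exp (-G t) with hW_def
  have hW : ∀ t, 0 ≤ t → HasDerivAt W
      (2 * ⟪u t, u' t⟫ * Real.exp (-G t) + V t * (Real.exp (-G t) * -(g t))) t := by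
    intro t ht
    exact (hV' t ht).mul (((hG t).neg).exp)
  have hWanti : AntitoneOn W (Set.Ici 0) := by
    apply antitoneOn_of_deriv_nonpos (convex_Ici 0)
    · intro t ht
      exact ((hW t ht).continuousAt).continuousWithinAt
    · intro t ht
      rw [interior_Ici] at ht
      exact ((hW t (le_of_lt ht)).differentiableAt).differentiableWithinAt
    · intro t ht
      rw [interior_Ici] at ht
      rw [(hW t ht.le).deriv]
      have hgt : g t = 2 * (a * O t - L) := rfl
      rw [hgt]
      have h1 := hkey t ht.le
      have h2 : (0:ℝ) < Real.exp (-G t) := Real.exp_pos _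
      have h3 : 0 ≤ V t := by rw [hVnorm]; positivity
      nlinarith [mul_le_mul_of_nonneg_right h1 h2.le]
  -- W t ≤ W 0 = V 0
  have hbound : ∀ t : ℝ, 0 ≤ t → V t ≤ V 0 * Real.exp (G t) := by
    intro t ht
    have h := hWanti (Set.self_mem_Ici) ht ht
    have hG0 : G 0 = 0 := intervalIntegral.integral_same
    simp only [hW_def, hG0, neg_zero, Real.exp_zero, mul_one] at h
    have h2 : (0:ℝ) < Real.exp (-G t) := Real.exp_pos _
    calc V t = V t * Real.exp (-G t) * Real.exp (G t) := by
          rw [mul_assoc, ← Real.exp_add]; simp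
      _ ≤ V 0 * Real.exp (G t) := by
          exact mul_le_mul_of_nonneg_right h (Real.exp_pos _).le
  -- G t = 2*a*∫O - 2*L*t
  have hGval : ∀ t : ℝ, G t = 2 * a * (∫ τ in (0:ℝ)..t, O τ) - 2 * L * t := by
    intro t
    simp only [hG_def, hg_def]
    have : ∀ τ, 2 * (a * O τ - L) = (2 * a) * O τ + (-(2 * L)) := fun τ => by ring
    simp_rw [this]
    rw [intervalIntegral.integral_add (show IntervalIntegrable (fun τ => 2 * a * O τ) MeasureTheory.volume 0 t from
        (continuous_const.mul hO).intervalIntegrable _ _)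
      (intervalIntegrable_const), intervalIntegral.integral_const_mul,
      intervalIntegral.integral_const]
    simp; ring
  -- G → -∞
  have hGbot : Tendsto G atTop atBot := by
    have h1 : Tendsto (fun t : ℝ => 2 * a * ((1 / t) * ∫ τ in (0:ℝ)..t, O τ) - 2 * L)
        atTop (nhds (-(2 * L))) := by
      have := (hOavg.const_mul (2 * a)).sub_const (2 * L)
      simpa using this
    have h2 : Tendsto (fun t : ℝ =>
        t * (2 * a * ((1 / t) * ∫ τ in (0:ℝ)..t, O τ) - 2 * L)) atTop atBot :=
      Filter.Tendsto.atTop_mul_neg (by linarith) tendsto_id h1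
    apply h2.congr'
    filter_upwards [eventually_gt_atTop (0:ℝ)] with t ht
    rw [hGval t]
    field_simp
  have hexp : Tendsto (fun t => V 0 * Real.exp (G t)) atTop (nhds 0) := by
    have := (Real.tendsto_exp_atBot.comp hGbot).const_mul (V 0)
    simpa using this
  have : Tendsto V atTop (nhds 0) := by
    apply squeeze_zero' ?_ ?_ hexp
    · filter_upwards with t; rw [hVnorm]; positivity
    · filter_upwards [eventually_ge_atTop (0:ℝ)] with t ht using hbound t ht
  apply this.congr
  intro t; rw [hVnorm]
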